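/- Let a, b, c be positive integers with b ≥ 2, a² ≤ c·b², and a² + b² < c², and let f(x) = (c − x)·((a − x)² + b²) + 1. Let ω₁ be the unique real root of f and ω₂ a nonreal root of f. Then |ω₂| < ω₁; in particular ω₁ is a Perron number (a cubic real algebraic integer strictly greater in absolute value than its other Galois conjugates). -/

import Mathlib

open Polynomial

/-- A Perron number: a real algebraic integer `p ≥ 1` strictly greater than the
absolute value of each of its other Galois conjugates. -/
def IsPerron (p : ℝ) : Prop :=
  1 ≤ p ∧ IsIntegral ℤ p ∧
    ∀ z : ℂ, (Polynomial.aeval z) (minpoly ℚ p) = 0 → z ≠ (p : ℂ) → ‖z‖ < p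

set_option maxHeartbeats 1000000 in
theorem cubic_root_is_perron (a b c : ℕ) (ha : 0 < a) (hb : 2 ≤ b) (hc : 0 < c)
    (habc : (a : ℝ) ^ 2 ≤ (c : ℝ) * (b : ℝ) ^ 2)
    (habc2 : (a : ℝ) ^ 2 + (b : ℝ) ^ 2 < (c : ℝ) ^ 2)
    (f : ℂ → ℂ)
    (hf : f = fun x => ((c : ℂ) - x) * (((a : ℂ) - x) ^ 2 + (b : ℂ) ^ 2) + 1)
    (ω₁ : ℝ) (hω₁ : f (ω₁ : ℂ) = 0)
    (ω₂ : ℂ) (hω₂ : f ω₂ = 0) (him : ω₂.im ≠ 0) :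
    ‖ω₂‖ < ω₁ ∧ IsPerron ω₁ ∧ (minpoly ℚ ω₁).natDegree = 3 := by
  have ha' : (1:ℝ) ≤ a := by exact_mod_cast ha
  have hb' : (2:ℝ) ≤ b := by exact_mod_cast hb
  have hc' : (1:ℝ) ≤ c := by exact_mod_cast hc
  simp only [hf] at hω₁ hω₂
  set ω₃ := (starRingEnd ℂ) ω₂ with hω₃def
  have h1 : ((c:ℂ) - ω₁) * (((a:ℂ) - ω₁)^2 + (b:ℂ)^2) + 1 = 0 := hω₁
  have h2 : ((c:ℂ) - ω₂) * (((a:ℂ) - ω₂)^2 + (b:ℂ)^2) + 1 = 0 := hω₂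
  have h3 : ((c:ℂ) - ω₃) * (((a:ℂ) - ω₃)^2 + (b:ℂ)^2) + 1 = 0 := by
    have h := congrArg (starRingEnd ℂ) h2
    simpa [map_add, map_mul, map_sub, map_pow] using h
  have hR : ((c:ℝ) - ω₁) * (((a:ℝ) - ω₁)^2 + (b:ℝ)^2) + 1 = 0 := by exact_mod_cast h1
  have hne23 : ω₂ ≠ ω₃ := by
    intro h
    apply him
    have := congrArg Complex.im h
    simp [hω₃def] at this
    linarith
  have hne12 : ((ω₁:ℝ):ℂ) ≠ ω₂ := by
    intro h
    apply him
    rw [← h]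
    simp
  have hne13 : ((ω₁:ℝ):ℂ) ≠ ω₃ := by
    intro h
    apply him
    have := congrArg Complex.im h
    simp [hω₃def] at this
    linarith
  -- elementary symmetric relations
  have E12 : ((ω₁:ℝ):ℂ)^2 + (ω₁:ℂ)*ω₂ + ω₂^2 - ((c:ℂ)+2*a)*((ω₁:ℂ)+ω₂)
      + (2*(a:ℂ)*c + (a:ℂ)^2 + (b:ℂ)^2) = 0 := by
    have hd := sub_ne_zero.mpr hne12
    apply mul_left_cancel₀ hd
    linear_combination h2 - h1
  have E23 : ω₂^2 + ω₂*ω₃ + ω₃^2 - ((c:ℂ)+2*a)*(ω₂+ω₃)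
      + (2*(a:ℂ)*c + (a:ℂ)^2 + (b:ℂ)^2) = 0 := by
    have hd := sub_ne_zero.mpr hne23
    apply mul_left_cancel₀ hd
    linear_combination h3 - h2
  have e1 : ((ω₁:ℝ):ℂ) + ω₂ + ω₃ = (c:ℂ) + 2*a := by
    have hd := sub_ne_zero.mpr hne13
    apply mul_left_cancel₀ hd
    linear_combination E12 - E23
  have e2 : ((ω₁:ℝ):ℂ)*ω₂ + (ω₁:ℂ)*ω₃ + ω₂*ω₃ = 2*(a:ℂ)*c + (a:ℂ)^2 + (b:ℂ)^2 := by
    linear_combination (ω₂+ω₃)*e1 - E23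
  have e3 : ((ω₁:ℝ):ℂ)*(ω₂*ω₃) = (c:ℂ)*((a:ℂ)^2+(b:ℂ)^2) + 1 := by
    linear_combination ((ω₁:ℝ):ℂ)*e2 - ((ω₁:ℝ):ℂ)^2*e1 - h1
  -- real versions
  have hc1 : ω₂ + ω₃ = 2*((ω₂.re:ℝ):ℂ) := by
    rw [hω₃def, Complex.add_conj]; push_cast; ring
  have hc2 : ω₂ * ω₃ = ((ω₂.re:ℝ):ℂ)^2 + ((ω₂.im:ℝ):ℂ)^2 := by
    rw [hω₃def, Complex.mul_conj, Complex.normSq_apply]; push_cast; ring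
  have re1 : ω₁ + 2*ω₂.re = (c:ℝ) + 2*a := by
    have h : ((ω₁ + 2*ω₂.re : ℝ):ℂ) = (((c:ℝ) + 2*a : ℝ):ℂ) := by
      push_cast
      linear_combination e1 - hc1
    exact_mod_cast h
  have re2 : ω₁*(2*ω₂.re) + (ω₂.re^2 + ω₂.im^2) = 2*(a:ℝ)*c + (a:ℝ)^2 + (b:ℝ)^2 := by
    have h : ((ω₁*(2*ω₂.re) + (ω₂.re^2 + ω₂.im^2) : ℝ):ℂ)
        = ((2*(a:ℝ)*c + (a:ℝ)^2 + (b:ℝ)^2 : ℝ):ℂ) := by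
      push_cast
      linear_combination e2 - ((ω₁:ℝ):ℂ)*hc1 - hc2
    exact_mod_cast h
  have re3 : ω₁*(ω₂.re^2 + ω₂.im^2) = (c:ℝ)*((a:ℝ)^2+(b:ℝ)^2) + 1 := by
    have h : ((ω₁*(ω₂.re^2 + ω₂.im^2) : ℝ):ℂ) = (((c:ℝ)*((a:ℝ)^2+(b:ℝ)^2) + 1 : ℝ):ℂ) := by
      push_cast
      linear_combination e3 - ((ω₁:ℝ):ℂ)*hc2
    exact_mod_cast h
  -- bounds on ω₁
  have hgt : (c:ℝ) < ω₁ := by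
    by_contra h
    push_neg at h
    nlinarith [hR, sq_nonneg ((a:ℝ) - ω₁), hb']
  have hω₁pos : (0:ℝ) < ω₁ := by linarith
  have key : ((c:ℝ)+1-ω₁)*(((c:ℝ)+1-ω₂.re)^2 + ω₂.im^2)
      = ((a:ℝ)-c-1)^2 + (b:ℝ)^2 - 1 := by
    linear_combination (-((c:ℝ)+1)^2)*re1 + ((c:ℝ)+1)*re2 - re3
  have hlt : ω₁ < (c:ℝ) + 1 := by
    by_contra h
    push_neg at h
    have hQ : 0 < ((c:ℝ)+1-ω₂.re)^2 + ω₂.im^2 := by positivity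
    nlinarith [key, hQ, sq_nonneg ((a:ℝ)-c-1), hb']
  -- |ω₂| < ω₁
  have hu_le : (c:ℝ)*((a:ℝ)^2+(b:ℝ)^2) + 1 ≤ (c:ℝ)^3 := by
    have hnat : a^2 + b^2 < c^2 := by exact_mod_cast habc2
    have hn : (a:ℝ)^2 + (b:ℝ)^2 + 1 ≤ (c:ℝ)^2 := by exact_mod_cast Nat.succ_le_of_lt hnat
    have hcnn : (0:ℝ) ≤ c := by linarith
    have h5 := mul_le_mul_of_nonneg_left hn hcnn
    nlinarith only [h5, hc']
  have hmlt : ω₂.re^2 + ω₂.im^2 < ω₁^2 := by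
    have hc3 : (c:ℝ)^3 < ω₁^3 := pow_lt_pow_left₀ hgt (by positivity) (by norm_num)
    have h4 : ω₁*(ω₂.re^2 + ω₂.im^2) < ω₁*ω₁^2 := by
      rw [re3]; nlinarith only [hu_le, hc3]
    exact lt_of_mul_lt_mul_left h4 (le_of_lt hω₁pos)
  have habs : ‖ω₂‖ < ω₁ := by
    refine lt_of_pow_lt_pow_left₀ 2 (le_of_lt hω₁pos) ?_
    rw [Complex.sq_norm, Complex.normSq_apply]
    nlinarith only [hmlt]
  -- the rational polynomial
  set P : ℚ[X] := X^3 - C ((c:ℚ)+2*a)*X^2 + C (2*(a:ℚ)*c+(a:ℚ)^2+(b:ℚ)^2)*X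
      - C ((c:ℚ)*((a:ℚ)^2+(b:ℚ)^2)+1) with hPdef
  have hPmonic : P.Monic := by
    rw [hPdef]; monicity!
  have hPdeg : P.natDegree = 3 := by
    rw [hPdef]; compute_degree!
  have hPne : P ≠ 0 := hPmonic.ne_zero
  have hPω₁ : aeval ω₁ P = 0 := by
    simp only [hPdef, map_sub, map_add, map_mul, map_pow, map_one, map_natCast, map_ofNat, aeval_X, aeval_C, eq_ratCast]
    push_cast
    linear_combination -hR
  have hω₁intQ : IsIntegral ℚ ω₁ := ⟨P, hPmonic, by rw [← aeval_def]; exact hPω₁⟩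
  have hω₁intZ : IsIntegral ℤ ω₁ := by
    refine ⟨X^3 - C ((c:ℤ)+2*a)*X^2 + C (2*(a:ℤ)*c+(a:ℤ)^2+(b:ℤ)^2)*X
      - C ((c:ℤ)*((a:ℤ)^2+(b:ℤ)^2)+1), ?_, ?_⟩
    · monicity!
    · rw [← aeval_def]
      simp only [map_sub, map_add, map_mul, map_pow, map_one, map_natCast, map_ofNat, aeval_X, aeval_C, eq_intCast]
      push_cast
      linear_combination -hR
  have hdvd : minpoly ℚ ω₁ ∣ P := minpoly.dvd ℚ ω₁ hPω₁
  -- roots of P over ℂ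
  have hroots : ∀ z : ℂ, (Polynomial.aeval z) P = 0 → z = ((ω₁:ℝ):ℂ) ∨ z = ω₂ ∨ z = ω₃ := by
    intro z hz
    simp only [hPdef, map_sub, map_add, map_mul, map_pow, map_one, map_natCast, map_ofNat, aeval_X, aeval_C, eq_ratCast] at hz
    push_cast at hz
    have hfac : (z - ((ω₁:ℝ):ℂ)) * ((z - ω₂) * (z - ω₃)) = 0 := by
      linear_combination hz - z^2*e1 + z*e2 - e3
    rcases mul_eq_zero.mp hfac with h | h
    · exact Or.inl (sub_eq_zero.mp h)
    · rcases mul_eq_zero.mp h with h | h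
      · exact Or.inr (Or.inl (sub_eq_zero.mp h))
      · exact Or.inr (Or.inr (sub_eq_zero.mp h))
  -- irrationality of ω₁
  have hirr : ∀ q : ℚ, (q:ℝ) ≠ ω₁ := by
    intro q hq
    have h1' : IsIntegral ℤ (algebraMap ℚ ℝ q) := by
      have : algebraMap ℚ ℝ q = (q:ℝ) := rfl
      rw [this, hq]; exact hω₁intZ
    have h2' : IsIntegral ℤ q :=
      (isIntegral_algebraMap_iff (algebraMap ℚ ℝ).injective).mp h1'
    obtain ⟨n, hn⟩ := IsIntegrallyClosed.isIntegral_iff.mp h2'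
    have hnr : ((n:ℤ):ℝ) = ω₁ := by
      rw [← hq, ← hn, eq_intCast]; norm_cast
    have hn1 : (c:ℤ) < n := by exact_mod_cast hnr ▸ hgt
    have hn2 : n < (c:ℤ) + 1 := by
      have : ((n:ℤ):ℝ) < (c:ℝ) + 1 := by rw [hnr]; exact hlt
      exact_mod_cast this
    omega
  -- degree of minpoly
  have hdeg_le : (minpoly ℚ ω₁).natDegree ≤ 3 :=
    hPdeg ▸ Polynomial.natDegree_le_of_dvd hdvd hPne
  have hdeg_pos : 0 < (minpoly ℚ ω₁).natDegree := minpoly.natDegree_pos hω₁intQ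
  have hne1 : (minpoly ℚ ω₁).natDegree ≠ 1 := by
    intro h
    obtain ⟨q, hq⟩ := (minpoly.natDegree_eq_one_iff).mp h
    exact hirr q hq
  have hne2 : (minpoly ℚ ω₁).natDegree ≠ 2 := by
    intro h
    obtain ⟨g, hg⟩ := hdvd
    have hgne : g ≠ 0 := by
      rintro rfl
      rw [mul_zero] at hg
      exact hPne hg
    have hdm : (3:ℕ) = 2 + g.natDegree := by
      rw [← hPdeg, hg, Polynomial.natDegree_mul (minpoly.ne_zero hω₁intQ) hgne, h]
    have hg1 : g.natDegree = 1 := by omega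
    have hgm : g.Monic := (minpoly.monic hω₁intQ).of_mul_monic_left (hg ▸ hPmonic)
    have hgeq : g = C (g.coeff 1) * X + C (g.coeff 0) :=
      Polynomial.eq_X_add_C_of_natDegree_le_one hg1.le
    have hco1 : g.coeff 1 = 1 := by
      have := hgm.coeff_natDegree
      rwa [hg1] at this
    set q : ℚ := -(g.coeff 0) with hqdef
    have hgz : aeval ((q:ℝ):ℂ) g = 0 := by
      rw [hgeq]
      simp only [map_add, map_mul, aeval_X, aeval_C, hco1, eq_ratCast, map_one]
      rw [hqdef]
      push_cast
      ring
    have hPz : aeval ((q:ℝ):ℂ) P = 0 := by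
      rw [hg, map_mul, hgz, mul_zero]
    rcases hroots _ hPz with h' | h' | h'
    · exact hirr q (Complex.ofReal_inj.mp h')
    · apply him
      have := congrArg Complex.im h'
      simpa using this.symm
    · apply him
      have := congrArg Complex.im h'
      simp [hω₃def] at this
      linarith
  refine ⟨habs, ⟨by linarith, hω₁intZ, ?_⟩, by omega⟩
  intro z hz hzne
  obtain ⟨g, hg⟩ := hdvd
  have hPz : aeval z P = 0 := by rw [hg, map_mul, hz, zero_mul]
  rcases hroots z hPz with h' | h' | h'
  · exact absurd h' hzne
  · rw [h']; exact habs
  · rw [h', hω₃def, Complex.norm_conj]; exact habs
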